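/- Let λ ∈ ℝ, let U be an open subset of the half-plane {(r,z) ∈ ℝ² : r > 0}, and let ψ : U → ℝ be twice continuously differentiable and satisfy ∂²ψ/∂r² − (1/r)∂ψ/∂r + ∂²ψ/∂z² = −λ²ψ on U. Define the axisymmetric region Ω = {(x,y,z) ∈ ℝ³ : (√(x²+y²), z) ∈ U} and the vector field B : Ω → ℝ³ whose Cartesian components, written with r = √(x²+y²), are B₁ = −(∂ψ/∂z)(r,z)·x/r² − λψ(r,z)·y/r², B₂ = −(∂ψ/∂z)(r,z)·y/r² + λψ(r,z)·x/r², B₃ = (∂ψ/∂r)(r,z)/r. Then B satisfies the Beltrami equation ∇×B = λB on Ω, and moreover B·∇Ψ = 0 on Ω, where Ψ(x,y,z) = ψ(√(x²+y²), z); in particular B is tangent to the level surfaces of the flux function Ψ. -/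

import Mathlib

set_option maxHeartbeats 1000000


/-- The `i`-th partial derivative of a real-valued function on `ℝ³`. -/
noncomputable def pd (i : Fin 3) (f : (Fin 3 → ℝ) → ℝ) (x : Fin 3 → ℝ) : ℝ :=
  fderiv ℝ f x (Pi.single i 1)

/-- The curl of a real vector field on `ℝ³`, defined componentwise. -/
noncomputable def curl (F : (Fin 3 → ℝ) → (Fin 3 → ℝ)) (x : Fin 3 → ℝ) : Fin 3 → ℝ :=
  ![pd 1 (fun y => F y 2) x - pd 2 (fun y => F y 1) x,
    pd 2 (fun y => F y 0) x - pd 0 (fun y => F y 2) x,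
    pd 0 (fun y => F y 1) x - pd 1 (fun y => F y 0) x]

open ContinuousLinearMap in
lemma proj_hasFDerivAt (i : Fin 3) (x : Fin 3 → ℝ) :
    HasFDerivAt (fun y : Fin 3 → ℝ => y i) (proj i : (Fin 3 → ℝ) →L[ℝ] ℝ) x :=
  (proj i : (Fin 3 → ℝ) →L[ℝ] ℝ).hasFDerivAt

open ContinuousLinearMap in
lemma normsq_hasFDerivAt (x : Fin 3 → ℝ) :
    HasFDerivAt (fun y : Fin 3 → ℝ => y 0 ^ 2 + y 1 ^ 2)
      ((2 * x 0) • (proj 0 : (Fin 3 → ℝ) →L[ℝ] ℝ)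
        + (2 * x 1) • (proj 1 : (Fin 3 → ℝ) →L[ℝ] ℝ)) x := by
  have heq : (fun y : Fin 3 → ℝ => y 0 ^ 2 + y 1 ^ 2) = fun y => y 0 * y 0 + y 1 * y 1 := by
    funext y; ring
  have hN : HasFDerivAt (fun y : Fin 3 → ℝ => y 0 ^ 2 + y 1 ^ 2) _ x :=
    heq ▸ (show HasFDerivAt (fun y : Fin 3 → ℝ => y 0 * y 0 + y 1 * y 1) _ x from
      (((proj_hasFDerivAt 0 x).mul (proj_hasFDerivAt 0 x)).add
      ((proj_hasFDerivAt 1 x).mul (proj_hasFDerivAt 1 x))))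
  refine hN.congr_fderiv ?_
  ext v
  simp
  ring

open ContinuousLinearMap in
lemma sqrt_hasFDerivAt (x : Fin 3 → ℝ) (hn : (0:ℝ) < x 0 ^ 2 + x 1 ^ 2) :
    HasFDerivAt (fun y : Fin 3 → ℝ => Real.sqrt (y 0 ^ 2 + y 1 ^ 2))
      ((x 0 / Real.sqrt (x 0 ^ 2 + x 1 ^ 2)) • (proj 0 : (Fin 3 → ℝ) →L[ℝ] ℝ)
        + (x 1 / Real.sqrt (x 0 ^ 2 + x 1 ^ 2)) • (proj 1 : (Fin 3 → ℝ) →L[ℝ] ℝ)) x := by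
  have hs := (Real.hasDerivAt_sqrt hn.ne').comp_hasFDerivAt x (normsq_hasFDerivAt x)
  refine hs.congr_fderiv ?_
  ext v
  have hrpos : 0 < Real.sqrt (x 0 ^ 2 + x 1 ^ 2) := Real.sqrt_pos.mpr hn
  simp [smul_smul]
  field_simp

open ContinuousLinearMap in
lemma cyl_hasFDerivAt (x : Fin 3 → ℝ) (hn : (0:ℝ) < x 0 ^ 2 + x 1 ^ 2)
    (f : ℝ × ℝ → ℝ)
    (hf : DifferentiableAt ℝ f (Real.sqrt (x 0 ^ 2 + x 1 ^ 2), x 2)) :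
    HasFDerivAt (fun y : Fin 3 → ℝ => f (Real.sqrt (y 0 ^ 2 + y 1 ^ 2), y 2))
      (((x 0 / Real.sqrt (x 0 ^ 2 + x 1 ^ 2)) * fderiv ℝ f (Real.sqrt (x 0 ^ 2 + x 1 ^ 2), x 2) (1, 0)) • (proj 0 : (Fin 3 → ℝ) →L[ℝ] ℝ)
        + ((x 1 / Real.sqrt (x 0 ^ 2 + x 1 ^ 2)) * fderiv ℝ f (Real.sqrt (x 0 ^ 2 + x 1 ^ 2), x 2) (1, 0)) • (proj 1 : (Fin 3 → ℝ) →L[ℝ] ℝ)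
        + (fderiv ℝ f (Real.sqrt (x 0 ^ 2 + x 1 ^ 2), x 2) (0, 1)) • (proj 2 : (Fin 3 → ℝ) →L[ℝ] ℝ)) x := by
  have hg : HasFDerivAt (fun y : Fin 3 → ℝ => (Real.sqrt (y 0 ^ 2 + y 1 ^ 2), y 2))
      (((x 0 / Real.sqrt (x 0 ^ 2 + x 1 ^ 2)) • (proj 0 : (Fin 3 → ℝ) →L[ℝ] ℝ)
        + (x 1 / Real.sqrt (x 0 ^ 2 + x 1 ^ 2)) • (proj 1 : (Fin 3 → ℝ) →L[ℝ] ℝ)).prod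
        (proj 2 : (Fin 3 → ℝ) →L[ℝ] ℝ)) x :=
    HasFDerivAt.prodMk (sqrt_hasFDerivAt x hn) (proj_hasFDerivAt 2 x)
  have h := hf.hasFDerivAt.comp x hg
  refine h.congr_fderiv ?_
  ext v
  set p := (Real.sqrt (x 0 ^ 2 + x 1 ^ 2), x 2)
  have key : ∀ a b : ℝ, fderiv ℝ f p (a, b)
      = a * fderiv ℝ f p (1, 0) + b * fderiv ℝ f p (0, 1) := by
    intro a b
    have : (a, b) = a • ((1:ℝ), (0:ℝ)) + b • ((0:ℝ), (1:ℝ)) := by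
      simp [Prod.ext_iff]
    rw [this, map_add, map_smul, map_smul, smul_eq_mul, smul_eq_mul]
  simp only [ContinuousLinearMap.comp_apply, ContinuousLinearMap.prod_apply,
    ContinuousLinearMap.add_apply, ContinuousLinearMap.smul_apply,
    ContinuousLinearMap.proj_apply, smul_eq_mul]
  rw [key (x 0 / Real.sqrt (x 0 ^ 2 + x 1 ^ 2) * v 0 + x 1 / Real.sqrt (x 0 ^ 2 + x 1 ^ 2) * v 1) (v 2)]
  ring

/-- if `ψ` solves the eigenvalue Grad–Shafranov equation
`ψ_rr − (1/r)ψ_r + ψ_zz = −λ²ψ` on an open set `U` of the half-plane `{r > 0}`, then the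
field `B = (λψ/r)φ̂ + (1/r)∇ψ×φ̂`, written in Cartesian components, satisfies the
Beltrami equation `∇×B = λB` on the axisymmetric region `Ω` generated by `U`, and is
tangent to the level surfaces of the flux function `Ψ(x,y,z) = ψ(√(x²+y²), z)`. -/
theorem grad_shafranov_gives_beltrami_field
    (lam : ℝ) (U : Set (ℝ × ℝ)) (hU : IsOpen U)
    (hUhalf : ∀ p ∈ U, 0 < p.1)
    (ψ : ℝ × ℝ → ℝ) (hψ : ContDiffOn ℝ 2 ψ U)
    (ψr ψz ψrr ψzz : ℝ × ℝ → ℝ)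
    (hψr : ψr = fun p => fderiv ℝ ψ p (1, 0))
    (hψz : ψz = fun p => fderiv ℝ ψ p (0, 1))
    (hψrr : ψrr = fun p => fderiv ℝ ψr p (1, 0))
    (hψzz : ψzz = fun p => fderiv ℝ ψz p (0, 1))
    (hGS : ∀ p ∈ U, ψrr p - (1 / p.1) * ψr p + ψzz p = -lam ^ 2 * ψ p)
    (B : (Fin 3 → ℝ) → (Fin 3 → ℝ))
    (hB : B = fun x =>
      ![-(ψz (Real.sqrt (x 0 ^ 2 + x 1 ^ 2), x 2)) * x 0 / (Real.sqrt (x 0 ^ 2 + x 1 ^ 2)) ^ 2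
          - lam * ψ (Real.sqrt (x 0 ^ 2 + x 1 ^ 2), x 2) * x 1 / (Real.sqrt (x 0 ^ 2 + x 1 ^ 2)) ^ 2,
        -(ψz (Real.sqrt (x 0 ^ 2 + x 1 ^ 2), x 2)) * x 1 / (Real.sqrt (x 0 ^ 2 + x 1 ^ 2)) ^ 2
          + lam * ψ (Real.sqrt (x 0 ^ 2 + x 1 ^ 2), x 2) * x 0 / (Real.sqrt (x 0 ^ 2 + x 1 ^ 2)) ^ 2,
        ψr (Real.sqrt (x 0 ^ 2 + x 1 ^ 2), x 2) / Real.sqrt (x 0 ^ 2 + x 1 ^ 2)])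
    (Ψ : (Fin 3 → ℝ) → ℝ)
    (hΨ : Ψ = fun x => ψ (Real.sqrt (x 0 ^ 2 + x 1 ^ 2), x 2)) :
    ∀ x : Fin 3 → ℝ, (Real.sqrt (x 0 ^ 2 + x 1 ^ 2), x 2) ∈ U →
      curl B x = lam • B x ∧ (∑ i, B x i * pd i Ψ x) = 0 := by
  subst hΨ
  intro x hx
  have hr : 0 < Real.sqrt (x 0 ^ 2 + x 1 ^ 2) := hUhalf _ hx
  have hn : (0:ℝ) < x 0 ^ 2 + x 1 ^ 2 := Real.sqrt_pos.mp hr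
  have hr2 : (Real.sqrt (x 0 ^ 2 + x 1 ^ 2)) ^ 2 = x 0 ^ 2 + x 1 ^ 2 := Real.sq_sqrt hn.le
  have hcd : ContDiffAt ℝ 2 ψ (Real.sqrt (x 0 ^ 2 + x 1 ^ 2), x 2) :=
    hψ.contDiffAt (hU.mem_nhds hx)
  have hdψ : DifferentiableAt ℝ ψ (Real.sqrt (x 0 ^ 2 + x 1 ^ 2), x 2) :=
    hcd.differentiableAt (by norm_num)
  have hcd1 : ContDiffAt ℝ 1 (fderiv ℝ ψ) (Real.sqrt (x 0 ^ 2 + x 1 ^ 2), x 2) :=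
    hcd.fderiv_right (by norm_num)
  have hdψr : DifferentiableAt ℝ ψr (Real.sqrt (x 0 ^ 2 + x 1 ^ 2), x 2) := by
    rw [hψr]
    exact (ContinuousLinearMap.apply ℝ ℝ ((1:ℝ), (0:ℝ))).differentiableAt.comp _
      (hcd1.differentiableAt one_ne_zero)
  have hdψz : DifferentiableAt ℝ ψz (Real.sqrt (x 0 ^ 2 + x 1 ^ 2), x 2) := by
    rw [hψz]
    exact (ContinuousLinearMap.apply ℝ ℝ ((0:ℝ), (1:ℝ))).differentiableAt.comp _
      (hcd1.differentiableAt one_ne_zero)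
  have Hψ := cyl_hasFDerivAt x hn ψ hdψ
  have Hψr := cyl_hasFDerivAt x hn ψr hdψr
  have Hψz := cyl_hasFDerivAt x hn ψz hdψz
  have eψr : fderiv ℝ ψ (Real.sqrt (x 0 ^ 2 + x 1 ^ 2), x 2) (1, 0)
      = ψr (Real.sqrt (x 0 ^ 2 + x 1 ^ 2), x 2) := by rw [hψr]
  have eψz : fderiv ℝ ψ (Real.sqrt (x 0 ^ 2 + x 1 ^ 2), x 2) (0, 1)
      = ψz (Real.sqrt (x 0 ^ 2 + x 1 ^ 2), x 2) := by rw [hψz]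
  have eψrr : fderiv ℝ ψr (Real.sqrt (x 0 ^ 2 + x 1 ^ 2), x 2) (1, 0)
      = ψrr (Real.sqrt (x 0 ^ 2 + x 1 ^ 2), x 2) := by rw [hψrr]
  have eψzz : fderiv ℝ ψz (Real.sqrt (x 0 ^ 2 + x 1 ^ 2), x 2) (0, 1)
      = ψzz (Real.sqrt (x 0 ^ 2 + x 1 ^ 2), x 2) := by rw [hψzz]
  have GS : ψrr (Real.sqrt (x 0 ^ 2 + x 1 ^ 2), x 2)
      - (1 / Real.sqrt (x 0 ^ 2 + x 1 ^ 2)) * ψr (Real.sqrt (x 0 ^ 2 + x 1 ^ 2), x 2)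
      + ψzz (Real.sqrt (x 0 ^ 2 + x 1 ^ 2), x 2)
      = -lam ^ 2 * ψ (Real.sqrt (x 0 ^ 2 + x 1 ^ 2), x 2) := hGS _ hx
  have hNinv : HasFDerivAt (fun y : Fin 3 → ℝ => (y 0 ^ 2 + y 1 ^ 2)⁻¹) _ x :=
    (hasDerivAt_inv hn.ne').comp_hasFDerivAt x (normsq_hasFDerivAt x)
  have hsinv : HasFDerivAt (fun y : Fin 3 → ℝ => (Real.sqrt (y 0 ^ 2 + y 1 ^ 2))⁻¹) _ x :=
    (hasDerivAt_inv hr.ne').comp_hasFDerivAt x (sqrt_hasFDerivAt x hn)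
  -- canonical component functions
  have c0 : (fun y => B y 0) = fun y : Fin 3 → ℝ =>
      (-(ψz (Real.sqrt (y 0 ^ 2 + y 1 ^ 2), y 2)) * y 0
        - lam * ψ (Real.sqrt (y 0 ^ 2 + y 1 ^ 2), y 2) * y 1) * (y 0 ^ 2 + y 1 ^ 2)⁻¹ := by
    funext y
    have h : (Real.sqrt (y 0 ^ 2 + y 1 ^ 2)) ^ 2 = y 0 ^ 2 + y 1 ^ 2 := Real.sq_sqrt (by positivity)
    rw [hB]; simp [h]; ring
  have c1 : (fun y => B y 1) = fun y : Fin 3 → ℝ =>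
      (-(ψz (Real.sqrt (y 0 ^ 2 + y 1 ^ 2), y 2)) * y 1
        + lam * ψ (Real.sqrt (y 0 ^ 2 + y 1 ^ 2), y 2) * y 0) * (y 0 ^ 2 + y 1 ^ 2)⁻¹ := by
    funext y
    have h : (Real.sqrt (y 0 ^ 2 + y 1 ^ 2)) ^ 2 = y 0 ^ 2 + y 1 ^ 2 := Real.sq_sqrt (by positivity)
    rw [hB]; simp [h]; ring
  have c2 : (fun y => B y 2) = fun y : Fin 3 → ℝ =>
      ψr (Real.sqrt (y 0 ^ 2 + y 1 ^ 2), y 2) * (Real.sqrt (y 0 ^ 2 + y 1 ^ 2))⁻¹ := by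
    funext y
    rw [hB]; simp; ring
  -- derivatives of the components
  have HB0 : HasFDerivAt (fun y : Fin 3 → ℝ =>
      (-(ψz (Real.sqrt (y 0 ^ 2 + y 1 ^ 2), y 2)) * y 0
        - lam * ψ (Real.sqrt (y 0 ^ 2 + y 1 ^ 2), y 2) * y 1) * (y 0 ^ 2 + y 1 ^ 2)⁻¹) _ x :=
    ((Hψz.neg.mul (proj_hasFDerivAt 0 x)).sub
      ((Hψ.const_mul lam).mul (proj_hasFDerivAt 1 x))).mul hNinv
  have HB1 : HasFDerivAt (fun y : Fin 3 → ℝ =>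
      (-(ψz (Real.sqrt (y 0 ^ 2 + y 1 ^ 2), y 2)) * y 1
        + lam * ψ (Real.sqrt (y 0 ^ 2 + y 1 ^ 2), y 2) * y 0) * (y 0 ^ 2 + y 1 ^ 2)⁻¹) _ x :=
    ((Hψz.neg.mul (proj_hasFDerivAt 1 x)).add
      ((Hψ.const_mul lam).mul (proj_hasFDerivAt 0 x))).mul hNinv
  have HB2 : HasFDerivAt (fun y : Fin 3 → ℝ =>
      ψr (Real.sqrt (y 0 ^ 2 + y 1 ^ 2), y 2) * (Real.sqrt (y 0 ^ 2 + y 1 ^ 2))⁻¹) _ x :=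
    Hψr.mul hsinv
  clear hcd hdψ hcd1 hdψr hdψz hψ hGS hψr hψz hψrr hψzz hx hUhalf hU
  have hs0 : Real.sqrt (x 0 ^ 2 + x 1 ^ 2) ≠ 0 := ne_of_gt hr
  generalize hsg : Real.sqrt (x 0 ^ 2 + x 1 ^ 2) = s at hs0 hr hr2 GS eψr eψz eψrr eψzz Hψ Hψr Hψz hsinv HB0 HB1 HB2 hB c0 c1 c2
  constructor
  · funext i
    fin_cases i
    · show curl B x 0 = lam * B x 0
      rw [curl]
      simp only [Matrix.cons_val_zero]
      rw [c1, c2]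
      show fderiv ℝ _ x (Pi.single 1 1) - fderiv ℝ _ x (Pi.single 2 1) = _
      rw [HB2.fderiv, HB1.fderiv]
      simp only [ContinuousLinearMap.add_apply, ContinuousLinearMap.smul_apply,
        ContinuousLinearMap.sub_apply, ContinuousLinearMap.comp_apply,
        ContinuousLinearMap.neg_apply, ContinuousLinearMap.proj_apply,
        ContinuousLinearMap.smulRight_apply, ContinuousLinearMap.one_apply,
        smul_eq_mul, Pi.single_apply]
      simp only [Fin.reduceEq, if_true, if_false, reduceIte, mul_zero, mul_one, zero_add,
        add_zero, zero_mul, one_mul]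
      rw [hB]
      simp only [Matrix.cons_val_zero]
      rw [hsg]
      simp only [← hr2]
      simp only [eψr, eψz, eψrr, eψzz]
      linear_combination (x 1 / s ^ 2) * GS
    · show curl B x 1 = lam * B x 1
      rw [curl]
      simp only [Matrix.cons_val_one, Matrix.head_cons]
      rw [c0, c2]
      show fderiv ℝ _ x (Pi.single 2 1) - fderiv ℝ _ x (Pi.single 0 1) = _
      rw [HB0.fderiv, HB2.fderiv]
      simp only [ContinuousLinearMap.add_apply, ContinuousLinearMap.smul_apply,
        ContinuousLinearMap.sub_apply, ContinuousLinearMap.comp_apply,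
        ContinuousLinearMap.neg_apply, ContinuousLinearMap.proj_apply,
        ContinuousLinearMap.smulRight_apply, ContinuousLinearMap.one_apply,
        smul_eq_mul, Pi.single_apply]
      simp only [Fin.reduceEq, if_true, if_false, reduceIte, mul_zero, mul_one, zero_add,
        add_zero, zero_mul, one_mul]
      rw [hB]
      simp only [Matrix.cons_val_one, Matrix.head_cons, Matrix.cons_val_zero]
      rw [hsg]
      simp only [← hr2]
      simp only [eψr, eψz, eψrr, eψzz]
      linear_combination (-(x 0) / s ^ 2) * GS
    · show curl B x 2 = lam * B x 2
      rw [curl]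
      simp only [Matrix.cons_val_two, Matrix.tail_cons, Matrix.head_cons]
      rw [c0, c1]
      show fderiv ℝ _ x (Pi.single 0 1) - fderiv ℝ _ x (Pi.single 1 1) = _
      rw [HB1.fderiv, HB0.fderiv]
      simp only [ContinuousLinearMap.add_apply, ContinuousLinearMap.smul_apply,
        ContinuousLinearMap.sub_apply, ContinuousLinearMap.comp_apply,
        ContinuousLinearMap.neg_apply, ContinuousLinearMap.proj_apply,
        ContinuousLinearMap.smulRight_apply, ContinuousLinearMap.one_apply,
        smul_eq_mul, Pi.single_apply]
      simp only [Fin.reduceEq, if_true, if_false, reduceIte, mul_zero, mul_one, zero_add,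
        add_zero, zero_mul, one_mul]
      rw [hB]
      simp only [Matrix.cons_val_two, Matrix.tail_cons, Matrix.head_cons]
      simp only [Pi.mul_apply, Pi.add_apply, Pi.sub_apply, Pi.neg_apply]
      rw [hsg]
      simp only [← hr2]
      simp only [eψr, eψz, eψrr, eψzz]
      linear_combination (norm := (field_simp; ring)) (2*lam*ψ (s, x 2)/s^4 - lam*ψr (s, x 2)/s^3) * hr2
  · rw [Fin.sum_univ_three]
    show B x 0 * fderiv ℝ _ x (Pi.single 0 1) + B x 1 * fderiv ℝ _ x (Pi.single 1 1)
      + B x 2 * fderiv ℝ _ x (Pi.single 2 1) = 0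
    rw [Hψ.fderiv]
    simp only [ContinuousLinearMap.add_apply, ContinuousLinearMap.smul_apply,
        ContinuousLinearMap.sub_apply, ContinuousLinearMap.comp_apply,
        ContinuousLinearMap.neg_apply, ContinuousLinearMap.proj_apply,
        ContinuousLinearMap.smulRight_apply, ContinuousLinearMap.one_apply,
        smul_eq_mul, Pi.single_apply]
    simp only [Fin.reduceEq, if_true, if_false, reduceIte, mul_zero, mul_one, zero_add,
      add_zero, zero_mul, one_mul]
    rw [hB]
    simp only [Matrix.cons_val_zero, Matrix.cons_val_one, Matrix.head_cons,
      Matrix.cons_val_two, Matrix.tail_cons]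
    rw [hsg]
    simp only [eψr, eψz]
    linear_combination (norm := (field_simp; ring)) (ψr (s, x 2) * ψz (s, x 2) / s^3) * hr2
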